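/- One-parameter chaining bound for the temporal modulus of continuity: let (Ω, F, P) be a probability space and (Y(α))_{α ∈ [1,2]} a real-valued stochastic process with almost surely continuous sample paths. Fix κ ∈ (0,1), c > 0 and s₀ > 0, and assume that for all 1 ≤ α₂ < α₁ ≤ 2 and all s ≥ s₀: P( Y(α₁) − Y(α₂) ≥ s (α₁ − α₂)^{κ} ) ≤ exp(−c s^{3/2}) and P( Y(α₁) − Y(α₂) ≤ −s (α₁ − α₂)^{κ} ) ≤ exp(−c s²). Then there exist c′ > 0 and s₁ > 0, depending only on κ, c and s₀, such that for all s ≥ s₁: P( sup_{τ ∈ (0,1]} ( Y(1+τ) − Y(1) ) / ( τ^{κ} (log(2/τ))^{2/3} ) ≥ s ) ≤ exp(−c′ s^{3/2}) and P( inf_{τ ∈ (0,1]} ( Y(1+τ) − Y(1) ) / ( τ^{κ} (log(2/τ))^{1/2} ) ≤ −s ) ≤ exp(−c′ s²). -/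

import Mathlib

open MeasureTheory Set
open scoped ENNReal NNReal

noncomputable section

/-- Reindexing of a sum over `Icc m₀ (m₀+N)`. -/
lemma sum_Icc_shift (m₀ N : ℕ) (f : ℕ → ℝ) :
    ∑ m ∈ Finset.Icc m₀ (m₀ + N), f m = ∑ k ∈ Finset.range (N + 1), f (m₀ + k) := by
  induction N with
  | zero => simp
  | succ N ih =>
      have h : m₀ + N + 1 = m₀ + (N + 1) := by omega
      rw [← Nat.add_assoc, Finset.sum_Icc_succ_top (by omega), ih, h, ← Finset.sum_range_succ]

set_option maxHeartbeats 2000000 in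
/-- Master one-sided chaining lemma. -/
lemma master_chain {Ω : Type*} [MeasurableSpace Ω] (P : Measure Ω) [IsProbabilityMeasure P]
    (Z : Ω → ℝ → ℝ)
    (hcont : ∀ᵐ ω ∂P, ContinuousOn (Z ω) (Set.Icc 1 2))
    (κ c s₀ p q : ℝ) (hκ : κ ∈ Set.Ioo (0 : ℝ) 1) (hc : 0 < c) (hs₀ : 0 < s₀)
    (hp : 1 ≤ p) (hq0 : 0 < q) (hq1 : q ≤ 1) (hpq : q * p = 1)
    (hub : ∀ α₁ α₂ : ℝ, 1 ≤ α₂ → α₂ < α₁ → α₁ ≤ 2 → ∀ s : ℝ, s₀ ≤ s →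
      P {ω | s * (α₁ - α₂) ^ κ ≤ Z ω α₁ - Z ω α₂} ≤
        ENNReal.ofReal (Real.exp (-c * s ^ p))) :
    ∃ c' : ℝ, 0 < c' ∧ ∃ s₁ : ℝ, 0 < s₁ ∧ ∀ s : ℝ, s₁ ≤ s →
      P {ω | s ≤ sSup ((fun τ : ℝ =>
            (Z ω (1 + τ) - Z ω 1) / (τ ^ κ * Real.log (2 / τ) ^ q)) '' Set.Ioc 0 1)} ≤
        ENNReal.ofReal (Real.exp (-c' * s ^ p)) := by
  obtain ⟨hκ0, hκ1⟩ := hκ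
  have hp0 : (0:ℝ) < p := lt_of_lt_of_le one_pos hp
  -- the geometric ratio
  set r : ℝ := (2:ℝ) ^ (-κ) with hr_def
  have hr0 : 0 < r := Real.rpow_pos_of_pos (by norm_num) _
  have hr1 : r < 1 := by
    exact Real.rpow_lt_one_of_one_lt_of_neg (by norm_num) (by linarith)
  -- summable series ∑ (k+1) r^k
  have hsum : Summable (fun k : ℕ => ((k:ℝ) + 1) * r ^ k) := by
    have h1 : Summable (fun k : ℕ => (k:ℝ) ^ 1 * r ^ k) :=
      summable_pow_mul_geometric_of_norm_lt_one 1 (by rw [Real.norm_eq_abs, abs_of_pos hr0]; exact hr1)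
    have h2 : Summable (fun k : ℕ => r ^ k) := summable_geometric_of_lt_one hr0.le hr1
    have := h1.add h2
    convert this using 2 with k
    ring
  set C : ℝ := ∑' k : ℕ, ((k:ℝ) + 1) * r ^ k with hC_def
  have hC1 : 1 ≤ C := by
    have := Summable.le_tsum hsum 0 (fun k _ => by positivity)
    simpa using this
  have hC0 : 0 < C := lt_of_lt_of_le one_pos hC1
  have hlog2 : 0 < Real.log 2 := Real.log_pos (by norm_num)
  set D : ℝ := C * (2 / Real.log 2) ^ q with hD_def
  have hD0 : 0 < D := by
    apply mul_pos hC0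
    exact Real.rpow_pos_of_pos (by positivity) _
  set A : ℝ := 1 / (2 * D) with hA_def
  have hA0 : 0 < A := by positivity
  -- choose c' and s₁
  refine ⟨c * A ^ p / 2, by positivity, max (s₀ / A) (((2 * Real.log 2 + 2) / (c * A ^ p)) ^ (1/p)),
    lt_of_lt_of_le (by positivity) (le_max_left _ _), ?_⟩
  intro s hs
  have hs_pos : 0 < s := lt_of_lt_of_le (by positivity) (le_trans (le_max_left _ _) hs)
  have hsA : s₀ ≤ A * s := by
    have h1 : s₀ / A ≤ s := le_trans (le_max_left _ _) hs
    calc s₀ = A * (s₀ / A) := by field_simp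
    _ ≤ A * s := mul_le_mul_of_nonneg_left h1 hA0.le
  have hB : 2 * Real.log 2 + 2 ≤ c * (A * s) ^ p := by
    have h1 : ((2 * Real.log 2 + 2) / (c * A ^ p)) ^ (1/p) ≤ s := le_trans (le_max_right _ _) hs
    have hbase : (0:ℝ) < (2 * Real.log 2 + 2) / (c * A ^ p) := by
      have : (0:ℝ) < A ^ p := Real.rpow_pos_of_pos hA0 _
      positivity
    have h2 : ((2 * Real.log 2 + 2) / (c * A ^ p)) ^ ((1/p) * p) ≤ s ^ p := by
      rw [Real.rpow_mul hbase.le]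
      exact Real.rpow_le_rpow (Real.rpow_nonneg hbase.le _) h1 hp0.le
    rw [one_div, inv_mul_cancel₀ hp0.ne', Real.rpow_one] at h2
    have hAp : (0:ℝ) < A ^ p := Real.rpow_pos_of_pos hA0 _
    rw [Real.mul_rpow hA0.le hs_pos.le]
    have hAp' : (0:ℝ) < A ^ p := hAp
    calc 2 * Real.log 2 + 2 = c * A ^ p * ((2 * Real.log 2 + 2) / (c * A ^ p)) := by field_simp
    _ ≤ c * A ^ p * s ^ p := mul_le_mul_of_nonneg_left h2 (by positivity)
    _ ≤ c * (A ^ p * s ^ p) := le_of_eq (by ring)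
  -- dyadic increment events
  set E : ℕ × ℕ → Set Ω := fun mj =>
    if mj.2 < 2 ^ mj.1 then
      {ω | A * s * ((mj.1 : ℝ) + 1) ^ q * r ^ mj.1 ≤
        Z ω (1 + ((mj.2 : ℝ) + 1) / 2 ^ mj.1) - Z ω (1 + (mj.2 : ℝ) / 2 ^ mj.1)}
    else ∅ with hE_def
  -- basic rpow facts on the gap
  have hgapκ : ∀ m : ℕ, (((2:ℝ) ^ m)⁻¹) ^ κ = r ^ m := by
    intro m
    rw [← Real.rpow_natCast (2:ℝ) m, ← Real.rpow_neg (by norm_num : (0:ℝ) ≤ 2),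
      ← Real.rpow_natCast r m, hr_def, ← Real.rpow_mul (by norm_num : (0:ℝ) ≤ 2),
      ← Real.rpow_mul (by norm_num : (0:ℝ) ≤ 2)]
    ring_nf
  -- per-event bound
  have hE_bound : ∀ mj : ℕ × ℕ, P (E mj) ≤
      (if mj.2 < 2 ^ mj.1 then ENNReal.ofReal (Real.exp (-(c * (A*s)^p) * ((mj.1:ℝ)+1))) else 0) := by
    rintro ⟨m, j⟩
    by_cases hj : j < 2 ^ m
    · simp only [hE_def, if_pos hj]
      have h2m : (0:ℝ) < 2 ^ m := by positivity
      have hcast : ((j:ℝ) + 1) ≤ 2 ^ m := by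
        have := (Nat.cast_le (α := ℝ)).2 (Nat.succ_le_of_lt hj)
        push_cast at this; linarith
      have hjnn : (0:ℝ) ≤ (j:ℝ) / 2 ^ m := by positivity
      have h₂ : (1:ℝ) ≤ 1 + (j:ℝ) / 2 ^ m := by linarith
      have hlt : 1 + (j:ℝ) / 2 ^ m < 1 + ((j:ℝ) + 1) / 2 ^ m := by
        have := (div_lt_div_iff_of_pos_right h2m).2 (by linarith : (j:ℝ) < (j:ℝ) + 1)
        linarith
      have hle2 : 1 + ((j:ℝ) + 1) / 2 ^ m ≤ 2 := by
        have := (div_le_one h2m).2 hcast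
        linarith
      have hm1 : (1:ℝ) ≤ (m:ℝ) + 1 := by
        have := Nat.cast_nonneg (α := ℝ) m; linarith
      have hrpow1 : (1:ℝ) ≤ ((m:ℝ) + 1) ^ q := Real.one_le_rpow hm1 hq0.le
      have hsm : s₀ ≤ A * s * ((m:ℝ) + 1) ^ q := by
        calc s₀ ≤ A * s := hsA
        _ = A * s * 1 := by ring
        _ ≤ A * s * ((m:ℝ) + 1) ^ q :=
            mul_le_mul_of_nonneg_left hrpow1 (by positivity)
      have hub' := hub _ _ h₂ hlt hle2 _ hsm
      have hαd : (1 + ((j:ℝ) + 1) / 2 ^ m) - (1 + (j:ℝ) / 2 ^ m) = ((2:ℝ) ^ m)⁻¹ := by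
        field_simp
        ring
      rw [hαd, hgapκ] at hub'
      refine le_trans hub' (le_of_eq ?_)
      congr 1
      rw [Real.mul_rpow (by positivity) (Real.rpow_nonneg (by positivity) _),
        ← Real.rpow_mul (by positivity), hpq, Real.rpow_one]
      ring
    · simp [hE_def, hj]
  -- tail sum bound
  have htail : (∑' mj : ℕ × ℕ,
      (if mj.2 < 2 ^ mj.1 then ENNReal.ofReal (Real.exp (-(c * (A*s)^p) * ((mj.1:ℝ)+1))) else 0)) ≤
      ENNReal.ofReal (Real.exp (-(c * A ^ p / 2) * s ^ p)) := by
    set B : ℝ := c * (A * s) ^ p with hB_def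
    have hBval : B = c * A ^ p * s ^ p := by
      rw [hB_def, Real.mul_rpow hA0.le hs_pos.le]; ring
    set x : ℝ≥0∞ := ENNReal.ofReal (Real.exp (-1)) with hx_def
    have hexp2 : Real.exp (-1) ≤ 1 / 2 := by
      rw [Real.exp_neg]
      have h2e : (2:ℝ) ≤ Real.exp 1 := by
        have := Real.add_one_le_exp 1; linarith
      rw [one_div]
      exact inv_anti₀ (by norm_num) h2e
    have hx_half : x ≤ ENNReal.ofReal (1/2) := ENNReal.ofReal_le_ofReal hexp2
    have hhalf_sub : ENNReal.ofReal (1/2) ≤ 1 - x := by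
      rw [hx_def, show (1:ℝ≥0∞) = ENNReal.ofReal 1 from ENNReal.ofReal_one.symm,
        ← ENNReal.ofReal_sub _ (Real.exp_nonneg _)]
      exact ENNReal.ofReal_le_ofReal (by linarith)
    have hgeom : x * (1 - x)⁻¹ ≤ 1 := by
      calc x * (1 - x)⁻¹ ≤ ENNReal.ofReal (1/2) * (ENNReal.ofReal (1/2))⁻¹ :=
        mul_le_mul' hx_half (ENNReal.inv_le_inv.2 hhalf_sub)
      _ = 1 := ENNReal.mul_inv_cancel (by simp) (by simp)
    have key : ∀ m : ℕ, (2:ℝ) ^ m * Real.exp (-B * ((m:ℝ) + 1)) ≤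
        Real.exp (-(c * A ^ p / 2) * s ^ p) * Real.exp (-1) ^ (m + 1) := by
      intro m
      have h2m : Real.exp ((m:ℝ) * Real.log 2) = (2:ℝ) ^ m := by
        rw [Real.exp_nat_mul, Real.exp_log (by norm_num : (0:ℝ) < 2)]
      rw [← h2m, ← Real.exp_nat_mul, ← Real.exp_add, ← Real.exp_add]
      apply Real.exp_le_exp.2
      have hmnn : (0:ℝ) ≤ (m:ℝ) := Nat.cast_nonneg m
      have hB2 : 2 * Real.log 2 + 2 ≤ B := hB
      have hgoal : (m:ℝ) * Real.log 2 + -B * ((m:ℝ) + 1) ≤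
          -(c * A ^ p / 2) * s ^ p + ((m:ℕ) + 1 : ℕ) * (-1) := by
        push_cast
        rw [hBval] at hB2 ⊢
        nlinarith [mul_nonneg hmnn hlog2.le]
      exact hgoal
    calc (∑' mj : ℕ × ℕ,
        (if mj.2 < 2 ^ mj.1 then ENNReal.ofReal (Real.exp (-B * ((mj.1:ℝ)+1))) else 0))
        = ∑' m : ℕ, ∑' j : ℕ,
            (if j < 2 ^ m then ENNReal.ofReal (Real.exp (-B * ((m:ℝ)+1))) else 0) :=
          ENNReal.tsum_prod
            (f := fun (m j : ℕ) => if j < 2 ^ m then ENNReal.ofReal (Real.exp (-B * ((m:ℝ)+1))) else 0)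
    _ = ∑' m : ℕ, ((2 ^ m : ℕ) : ℝ≥0∞) * ENNReal.ofReal (Real.exp (-B * ((m:ℝ)+1))) := by
        congr 1; funext m
        rw [tsum_eq_sum (s := Finset.range (2 ^ m))
          (by intro j hj; rw [if_neg]; simpa using hj)]
        rw [Finset.sum_congr rfl (fun j hj => if_pos (Finset.mem_range.1 hj)),
          Finset.sum_const, Finset.card_range, nsmul_eq_mul]
    _ ≤ ∑' m : ℕ, ENNReal.ofReal (Real.exp (-(c * A ^ p / 2) * s ^ p)) * x ^ (m + 1) := by
        apply ENNReal.tsum_le_tsum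
        intro m
        have hc2 : ((2 ^ m : ℕ) : ℝ≥0∞) = ENNReal.ofReal ((2:ℝ) ^ m) := by
          rw [ENNReal.ofReal_pow (by norm_num : (0:ℝ) ≤ 2)]
          push_cast
          rw [ENNReal.ofReal_ofNat]
        rw [hc2, ← ENNReal.ofReal_mul (by positivity), hx_def,
          ← ENNReal.ofReal_pow (Real.exp_nonneg _),
          ← ENNReal.ofReal_mul (Real.exp_nonneg _)]
        exact ENNReal.ofReal_le_ofReal (key m)
    _ = ENNReal.ofReal (Real.exp (-(c * A ^ p / 2) * s ^ p)) * ∑' m : ℕ, x ^ (m + 1) :=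
        ENNReal.tsum_mul_left
    _ ≤ ENNReal.ofReal (Real.exp (-(c * A ^ p / 2) * s ^ p)) * 1 := by
        refine mul_le_mul_right ?_ _
        have h1 : (∑' m : ℕ, x ^ (m + 1)) = x * ∑' m : ℕ, x ^ m := by
          rw [← ENNReal.tsum_mul_left]
          exact tsum_congr fun m => by rw [pow_succ, mul_comm]
        rw [h1, ENNReal.tsum_geometric]
        exact hgeom
    _ = _ := mul_one _
  -- pathwise chaining: good & continuous implies small sup
  have hpath : ∀ ω : Ω, ω ∉ (⋃ mj, E mj) → ContinuousOn (Z ω) (Set.Icc 1 2) →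
      sSup ((fun τ : ℝ => (Z ω (1 + τ) - Z ω 1) / (τ ^ κ * Real.log (2 / τ) ^ q)) ''
        Set.Ioc 0 1) ≤ s / 2 := by
    intro ω hgood hcω
    have hinc : ∀ m j : ℕ, j < 2 ^ m →
        Z ω (1 + ((j:ℝ) + 1) / 2 ^ m) - Z ω (1 + (j:ℝ) / 2 ^ m) <
          A * s * ((m:ℝ) + 1) ^ q * r ^ m := by
      intro m j hj
      by_contra hcon
      push_neg at hcon
      exact hgood (Set.mem_iUnion.2 ⟨(m, j), by
        simp only [hE_def, if_pos hj]; exact hcon⟩)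
    -- chaining claim
    have key : ∀ n : ℕ, ∀ j : ℕ, 1 ≤ j → j ≤ 2 ^ n → ∃ m₀ : ℕ, m₀ ≤ n ∧
        2 ^ n ≤ j * 2 ^ m₀ ∧ (j + 1) * 2 ^ m₀ ≤ 2 ^ (n + 1) ∧
        Z ω (1 + (j:ℝ) / 2 ^ n) - Z ω 1 ≤
          ∑ m ∈ Finset.Icc m₀ n, A * s * ((m:ℝ) + 1) ^ q * r ^ m := by
      intro n
      induction n with
      | zero =>
          intro j hj1 hj2
          have hj : j = 1 := by omega
          subst hj
          refine ⟨0, le_refl 0, by norm_num, by norm_num, ?_⟩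
          have h := (hinc 0 0 (by norm_num)).le
          simp only [Finset.Icc_self, Finset.sum_singleton]
          norm_num at h ⊢
          exact h
      | succ n ih =>
          intro j hj1 hj2
          rcases Nat.even_or_odd j with ⟨k, hk⟩ | ⟨k, hk⟩
          · -- even : j = k + k
            subst hk
            have hk1 : 1 ≤ k := by omega
            have hk2 : k ≤ 2 ^ n := by rw [pow_succ] at hj2; omega
            obtain ⟨m₀, hm₀n, hlo, hhi, hZ⟩ := ih k hk1 hk2
            refine ⟨m₀, le_trans hm₀n (Nat.le_succ n), ?_, ?_, ?_⟩
            · calc 2 ^ (n+1) = 2 ^ n * 2 := by rw [pow_succ]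
              _ ≤ k * 2 ^ m₀ * 2 := Nat.mul_le_mul_right _ hlo
              _ = (k + k) * 2 ^ m₀ := by ring
            · calc (k + k + 1) * 2 ^ m₀ ≤ (k + k + 2) * 2 ^ m₀ :=
                Nat.mul_le_mul_right _ (by omega)
              _ = ((k + 1) * 2 ^ m₀) * 2 := by ring
              _ ≤ 2 ^ (n+1) * 2 := Nat.mul_le_mul_right _ hhi
              _ = 2 ^ (n+1+1) := by ring
            · have hcastj : ((k + k : ℕ):ℝ) / 2 ^ (n+1) = (k:ℝ) / 2 ^ n := by
                have h2 : ((2:ℝ) ^ n) ≠ 0 := by positivity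
                push_cast
                rw [pow_succ]
                field_simp
                ring
              rw [hcastj]
              refine le_trans hZ (Finset.sum_le_sum_of_subset_of_nonneg
                (Finset.Icc_subset_Icc_right (Nat.le_succ n)) ?_)
              intro i _ _
              have : (0:ℝ) ≤ ((i:ℝ) + 1) ^ q := Real.rpow_nonneg (by positivity) _
              positivity
          · -- odd : j = 2k + 1
            subst hk
            by_cases hk0 : k = 0
            · subst hk0
              refine ⟨n+1, le_refl _, by norm_num, ?_, ?_⟩
              · norm_num
                calc 2 * 2 ^ (n+1) = 2 ^ (n+1+1) := by rw [pow_succ]; ring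
                _ ≤ 2 ^ (n+1+1) := le_refl _
              · have h := (hinc (n+1) 0 (by positivity)).le
                simp only [Finset.Icc_self, Finset.sum_singleton]
                norm_num at h ⊢
                exact h
            · have hk1 : 1 ≤ k := Nat.one_le_iff_ne_zero.2 hk0
              have hk2 : k ≤ 2 ^ n := by rw [pow_succ] at hj2; omega
              obtain ⟨m₀, hm₀n, hlo, hhi, hZ⟩ := ih k hk1 hk2
              have hm₀n1 : m₀ ≤ n + 1 := le_trans hm₀n (Nat.le_succ n)
              refine ⟨m₀, hm₀n1, ?_, ?_, ?_⟩
              · calc 2 ^ (n+1) = 2 ^ n * 2 := by rw [pow_succ]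
                _ ≤ k * 2 ^ m₀ * 2 := Nat.mul_le_mul_right _ hlo
                _ = (2*k) * 2 ^ m₀ := by ring
                _ ≤ (2*k+1) * 2 ^ m₀ := Nat.mul_le_mul_right _ (by omega)
              · calc (2*k+1+1) * 2 ^ m₀ = ((k+1) * 2 ^ m₀) * 2 := by ring
                _ ≤ 2 ^ (n+1) * 2 := Nat.mul_le_mul_right _ hhi
                _ = 2 ^ (n+1+1) := by ring
              · have h2k : 2*k < 2 ^ (n+1) := by omega
                have h := (hinc (n+1) (2*k) h2k).le
                have harg1 : 1 + ((2*k+1 : ℕ):ℝ) / 2 ^ (n+1) =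
                    1 + (((2*k : ℕ):ℝ) + 1) / 2 ^ (n+1) := by push_cast; ring
                have harg2 : 1 + ((2*k : ℕ):ℝ) / 2 ^ (n+1) = 1 + (k:ℝ) / 2 ^ n := by
                  push_cast
                  rw [pow_succ]
                  have h2 : ((2:ℝ) ^ n) ≠ 0 := by positivity
                  field_simp
                rw [harg1]
                rw [harg2] at h
                rw [Finset.sum_Icc_succ_top hm₀n1]
                linarith
    -- bound at dyadic points
    have hden : ∀ τ : ℝ, τ ∈ Set.Ioc (0:ℝ) 1 →
        0 < τ ^ κ * Real.log (2 / τ) ^ q ∧ 0 < Real.log (2 / τ) := by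
      intro τ hτ
      obtain ⟨hτ0, hτ1⟩ := hτ
      have h2τ : (2:ℝ) ≤ 2 / τ := by
        rw [le_div_iff₀ hτ0]; nlinarith
      have hL : 0 < Real.log (2 / τ) :=
        lt_of_lt_of_le hlog2 (Real.log_le_log (by norm_num) h2τ)
      exact ⟨mul_pos (Real.rpow_pos_of_pos hτ0 _) (Real.rpow_pos_of_pos hL _), hL⟩
    have hdyadic : ∀ n j : ℕ, 1 ≤ j → j ≤ 2 ^ n →
        Z ω (1 + (j:ℝ)/2^n) - Z ω 1 ≤
          s / 2 * (((j:ℝ)/2^n) ^ κ * Real.log (2 / ((j:ℝ)/2^n)) ^ q) := by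
      intro n j hj1 hj2
      obtain ⟨m₀, hm₀n, hlo, hhi, hZ⟩ := key n j hj1 hj2
      have hj0 : (0:ℝ) < (j:ℝ) := by exact_mod_cast hj1
      have hτ0 : (0:ℝ) < (j:ℝ)/2^n := by positivity
      have hτ1 : (j:ℝ)/2^n ≤ 1 := by
        rw [div_le_one (by positivity)]
        exact_mod_cast hj2
      obtain ⟨hden', hL0⟩ := hden _ ⟨hτ0, hτ1⟩
      -- bound the chain sum
      have hsum_bound : ∑ m ∈ Finset.Icc m₀ n, A * s * ((m:ℝ) + 1) ^ q * r ^ m ≤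
          A * s * ((m₀:ℝ) + 1) ^ q * r ^ m₀ * C := by
        have hn : Finset.Icc m₀ n = Finset.Icc m₀ (m₀ + (n - m₀)) := by
          rw [Nat.add_sub_cancel' hm₀n]
        rw [hn, sum_Icc_shift]
        have hterm : ∀ k ∈ Finset.range (n - m₀ + 1),
            A * s * (((m₀ + k : ℕ):ℝ) + 1) ^ q * r ^ (m₀ + k) ≤
            A * s * ((m₀:ℝ) + 1) ^ q * r ^ m₀ * (((k:ℝ) + 1) * r ^ k) := by
          intro k _
          have hm₀nn : (0:ℝ) ≤ (m₀:ℝ) := Nat.cast_nonneg _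
          have hknn : (0:ℝ) ≤ (k:ℝ) := Nat.cast_nonneg _
          have h1 : ((m₀:ℝ) + (k:ℝ) + 1) ≤ ((m₀:ℝ) + 1) * ((k:ℝ) + 1) := by nlinarith
          have h2 : (((m₀ + k : ℕ):ℝ) + 1) ^ q ≤ (((m₀:ℝ) + 1) * ((k:ℝ) + 1)) ^ q := by
            apply Real.rpow_le_rpow (by positivity) _ hq0.le
            push_cast; linarith
          have h3 : (((m₀:ℝ) + 1) * ((k:ℝ) + 1)) ^ q =
              ((m₀:ℝ) + 1) ^ q * ((k:ℝ) + 1) ^ q :=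
            Real.mul_rpow (by positivity) (by positivity)
          have h4 : ((k:ℝ) + 1) ^ q ≤ (k:ℝ) + 1 := by
            calc ((k:ℝ) + 1) ^ q ≤ ((k:ℝ) + 1) ^ (1:ℝ) :=
              Real.rpow_le_rpow_of_exponent_le (by linarith) hq1
            _ = (k:ℝ) + 1 := Real.rpow_one _
          have h5 : (((m₀ + k : ℕ):ℝ) + 1) ^ q ≤ ((m₀:ℝ) + 1) ^ q * ((k:ℝ) + 1) := by
            rw [h3] at h2
            calc (((m₀ + k : ℕ):ℝ) + 1) ^ q ≤ ((m₀:ℝ) + 1) ^ q * ((k:ℝ) + 1) ^ q := h2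
            _ ≤ ((m₀:ℝ) + 1) ^ q * ((k:ℝ) + 1) :=
                mul_le_mul_of_nonneg_left h4 (Real.rpow_nonneg (by positivity) _)
          calc A * s * (((m₀ + k : ℕ):ℝ) + 1) ^ q * r ^ (m₀ + k)
              = (A * s * r ^ (m₀ + k)) * (((m₀ + k : ℕ):ℝ) + 1) ^ q := by ring
          _ ≤ (A * s * r ^ (m₀ + k)) * (((m₀:ℝ) + 1) ^ q * ((k:ℝ) + 1)) := by
              apply mul_le_mul_of_nonneg_left h5 (by positivity)
          _ = A * s * ((m₀:ℝ) + 1) ^ q * r ^ m₀ * (((k:ℝ) + 1) * r ^ k) := by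
              rw [pow_add]; ring
        calc ∑ k ∈ Finset.range (n - m₀ + 1),
              A * s * (((m₀ + k : ℕ):ℝ) + 1) ^ q * r ^ (m₀ + k)
            ≤ ∑ k ∈ Finset.range (n - m₀ + 1),
              A * s * ((m₀:ℝ) + 1) ^ q * r ^ m₀ * (((k:ℝ) + 1) * r ^ k) :=
            Finset.sum_le_sum hterm
        _ = A * s * ((m₀:ℝ) + 1) ^ q * r ^ m₀ *
              ∑ k ∈ Finset.range (n - m₀ + 1), ((k:ℝ) + 1) * r ^ k := by
            rw [Finset.mul_sum]
        _ ≤ A * s * ((m₀:ℝ) + 1) ^ q * r ^ m₀ * C := by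
            apply mul_le_mul_of_nonneg_left
              (Summable.sum_le_tsum _ (fun k _ => by positivity) hsum)
            have : (0:ℝ) ≤ ((m₀:ℝ) + 1) ^ q := Real.rpow_nonneg (by positivity) _
            positivity
      -- geometry of the dyadic scale
      have h2m₀τ : ((2:ℝ) ^ m₀)⁻¹ ≤ (j:ℝ)/2^n := by
        rw [inv_eq_one_div, div_le_div_iff₀ (by positivity) (by positivity)]
        have : ((2:ℝ)^n) ≤ (j:ℝ) * (2:ℝ)^m₀ := by exact_mod_cast hlo
        linarith
      have hrm₀ : r ^ m₀ ≤ ((j:ℝ)/2^n) ^ κ := by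
        rw [← hgapκ m₀]
        exact Real.rpow_le_rpow (by positivity) h2m₀τ hκ0.le
      have hτ2m₀ : (2:ℝ)^m₀ ≤ 2 / ((j:ℝ)/2^n) := by
        rw [le_div_iff₀ hτ0]
        have hcast : ((j:ℝ) + 1) * (2:ℝ)^m₀ ≤ 2 * (2:ℝ)^n := by
          have : (((j+1) * 2 ^ m₀ : ℕ):ℝ) ≤ ((2^(n+1) : ℕ):ℝ) := by exact_mod_cast hhi
          push_cast at this
          rw [pow_succ] at this
          linarith
        have h2n : (0:ℝ) < (2:ℝ)^n := by positivity
        rw [mul_comm, div_mul_eq_mul_div, div_le_iff₀ h2n]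
        nlinarith [pow_pos (show (0:ℝ) < 2 by norm_num) m₀]
      have hm₀log : ((m₀:ℝ) + 1) * Real.log 2 ≤ 2 * Real.log (2 / ((j:ℝ)/2^n)) := by
        have hlog1 : Real.log 2 ≤ Real.log (2 / ((j:ℝ)/2^n)) := by
          apply Real.log_le_log (by norm_num)
          rw [le_div_iff₀ hτ0]; nlinarith
        have hlog2' : (m₀:ℝ) * Real.log 2 ≤ Real.log (2 / ((j:ℝ)/2^n)) := by
          have := Real.log_le_log (by positivity : (0:ℝ) < (2:ℝ)^m₀) hτ2m₀
          rwa [Real.log_pow] at this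
        linarith
      have hm₀q : ((m₀:ℝ) + 1) ^ q ≤
          (2 / Real.log 2) ^ q * Real.log (2 / ((j:ℝ)/2^n)) ^ q := by
        rw [← Real.mul_rpow (by positivity) hL0.le]
        apply Real.rpow_le_rpow (by positivity) _ hq0.le
        rw [div_mul_eq_mul_div, le_div_iff₀ hlog2]
        linarith
      -- final combination
      have hAD : A * (2 / Real.log 2) ^ q * C = 1 / 2 := by
        rw [hA_def, hD_def]
        field_simp
      calc Z ω (1 + (j:ℝ)/2^n) - Z ω 1
          ≤ ∑ m ∈ Finset.Icc m₀ n, A * s * ((m:ℝ) + 1) ^ q * r ^ m := hZ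
      _ ≤ A * s * ((m₀:ℝ) + 1) ^ q * r ^ m₀ * C := hsum_bound
      _ ≤ A * s * ((2 / Real.log 2) ^ q * Real.log (2 / ((j:ℝ)/2^n)) ^ q) *
            (((j:ℝ)/2^n) ^ κ) * C := by
          have hnn1 : (0:ℝ) ≤ A * s := by positivity
          have hnn2 : (0:ℝ) ≤ r ^ m₀ := by positivity
          have hnn3 : (0:ℝ) ≤ ((m₀:ℝ) + 1) ^ q := Real.rpow_nonneg (by positivity) _
          have hnn4 : (0:ℝ) ≤ (2 / Real.log 2) ^ q * Real.log (2 / ((j:ℝ)/2^n)) ^ q := by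
            have := Real.rpow_nonneg (le_of_lt hL0) q
            have h' := Real.rpow_nonneg (show (0:ℝ) ≤ 2 / Real.log 2 by positivity) q
            positivity
          have step1 : A * s * ((m₀:ℝ) + 1) ^ q * r ^ m₀ ≤
              A * s * ((2 / Real.log 2) ^ q * Real.log (2 / ((j:ℝ)/2^n)) ^ q) *
                (((j:ℝ)/2^n) ^ κ) := by
            calc A * s * ((m₀:ℝ) + 1) ^ q * r ^ m₀
                ≤ A * s * ((2 / Real.log 2) ^ q * Real.log (2 / ((j:ℝ)/2^n)) ^ q) *
                  r ^ m₀ := by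
                  apply mul_le_mul_of_nonneg_right _ hnn2
                  exact mul_le_mul_of_nonneg_left hm₀q hnn1
            _ ≤ A * s * ((2 / Real.log 2) ^ q * Real.log (2 / ((j:ℝ)/2^n)) ^ q) *
                  (((j:ℝ)/2^n) ^ κ) := by
                  apply mul_le_mul_of_nonneg_left hrm₀
                  exact mul_nonneg hnn1 hnn4
          exact mul_le_mul_of_nonneg_right step1 hC0.le
      _ = (A * (2 / Real.log 2) ^ q * C) * s *
            (((j:ℝ)/2^n) ^ κ * Real.log (2 / ((j:ℝ)/2^n)) ^ q) := by ring
      _ = s / 2 * (((j:ℝ)/2^n) ^ κ * Real.log (2 / ((j:ℝ)/2^n)) ^ q) := by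
          rw [hAD]; ring
    -- extend to all of Ioc 0 1 by continuity
    set F : ℝ → ℝ := fun τ => (Z ω (1 + τ) - Z ω 1) / (τ ^ κ * Real.log (2 / τ) ^ q)
      with hF_def
    have hFdyadic : ∀ n j : ℕ, 1 ≤ j → j ≤ 2 ^ n → F ((j:ℝ)/2^n) ≤ s / 2 := by
      intro n j hj1 hj2
      have hj0 : (0:ℝ) < (j:ℝ) := by exact_mod_cast hj1
      have hτ0 : (0:ℝ) < (j:ℝ)/2^n := by positivity
      have hτ1 : (j:ℝ)/2^n ≤ 1 := by
        rw [div_le_one (by positivity)]; exact_mod_cast hj2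
      obtain ⟨hden', _⟩ := hden _ ⟨hτ0, hτ1⟩
      rw [hF_def]
      simp only
      rw [div_le_iff₀ hden']
      exact hdyadic n j hj1 hj2
    have hFcont : ∀ τ ∈ Set.Ioc (0:ℝ) 1, ContinuousWithinAt F (Set.Ioc 0 1) τ := by
      intro τ hτ
      obtain ⟨hτ0, hτ1⟩ := hτ
      obtain ⟨hden', hL0⟩ := hden τ ⟨hτ0, hτ1⟩
      have hmap : Set.MapsTo (fun t : ℝ => 1 + t) (Set.Ioc 0 1) (Set.Icc 1 2) := by
        intro t ht
        obtain ⟨ht1, ht2⟩ := ht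
        simp only [Set.mem_Icc]
        constructor <;> [linarith; linarith]
      have hnum : ContinuousWithinAt (fun t : ℝ => Z ω (1 + t) - Z ω 1)
          (Set.Ioc 0 1) τ := by
        have h1 : ContinuousWithinAt (fun t : ℝ => Z ω (1 + t)) (Set.Ioc 0 1) τ :=
          (hcω (1+τ) ⟨by linarith, by linarith⟩).comp
            ((continuous_const.add continuous_id).continuousWithinAt) hmap
        exact h1.sub continuousWithinAt_const
      have hden_cont : ContinuousAt (fun t : ℝ => t ^ κ * Real.log (2/t) ^ q) τ := by
        have h1 : ContinuousAt (fun t : ℝ => t ^ κ) τ :=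
          Real.continuousAt_rpow_const τ κ (Or.inl hτ0.ne')
        have h2 : ContinuousAt (fun t : ℝ => Real.log (2/t)) τ := by
          have hdiv : ContinuousAt (fun t : ℝ => 2/t) τ :=
            continuousAt_const.div continuousAt_id hτ0.ne'
          exact (Real.continuousAt_log (by positivity)).comp hdiv
        exact h1.mul (h2.rpow_const (Or.inl hL0.ne'))
      exact hnum.div hden_cont.continuousWithinAt hden'.ne'
    have hFall : ∀ τ ∈ Set.Ioc (0:ℝ) 1, F τ ≤ s / 2 := by
      intro τ hτmem
      obtain ⟨hτ0, hτ1⟩ := hτmem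
      set d : ℕ → ℝ := fun n => ((⌈τ * 2^n⌉₊ : ℕ):ℝ)/2^n with hd_def
      have hjn : ∀ n : ℕ, 1 ≤ ⌈τ * 2^n⌉₊ ∧ ⌈τ * 2^n⌉₊ ≤ 2^n := by
        intro n
        constructor
        · exact Nat.one_le_iff_ne_zero.2 (by
            intro h0
            have := Nat.ceil_eq_zero.1 h0
            nlinarith [pow_pos (show (0:ℝ) < 2 by norm_num) n])
        · apply Nat.ceil_le.2
          push_cast
          nlinarith [pow_pos (show (0:ℝ) < 2 by norm_num) n]
      have hd_mem : ∀ n : ℕ, d n ∈ Set.Ioc (0:ℝ) 1 := by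
        intro n
        obtain ⟨h1, h2⟩ := hjn n
        have hj0 : (0:ℝ) < (⌈τ * 2^n⌉₊ : ℝ) := by exact_mod_cast h1
        constructor
        · positivity
        · rw [hd_def]
          simp only
          rw [div_le_one (by positivity)]
          exact_mod_cast h2
      have hFd : ∀ n : ℕ, F (d n) ≤ s / 2 := fun n =>
        hFdyadic n _ (hjn n).1 (hjn n).2
      have hd_ge : ∀ n : ℕ, τ ≤ d n := by
        intro n
        rw [hd_def]
        simp only
        rw [le_div_iff₀ (by positivity)]
        exact Nat.le_ceil _
      have hd_le : ∀ n : ℕ, d n ≤ τ + (1/2:ℝ)^n := by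
        intro n
        rw [hd_def]
        simp only
        rw [div_le_iff₀ (by positivity)]
        have := Nat.ceil_lt_add_one (by positivity : (0:ℝ) ≤ τ * 2^n)
        have hpow : ((1:ℝ)/2)^n * 2^n = 1 := by
          rw [div_pow, one_pow, div_mul_cancel₀]
          positivity
        nlinarith [this]
      have hd_tend : Filter.Tendsto d Filter.atTop (nhds τ) := by
        have hupper : Filter.Tendsto (fun n : ℕ => τ + (1/2:ℝ)^n) Filter.atTop
            (nhds (τ + 0)) :=
          tendsto_const_nhds.add
            (tendsto_pow_atTop_nhds_zero_of_lt_one (by norm_num) (by norm_num))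
        rw [add_zero] at hupper
        exact tendsto_of_tendsto_of_tendsto_of_le_of_le tendsto_const_nhds hupper
          hd_ge hd_le
      have hcomp : Filter.Tendsto (F ∘ d) Filter.atTop (nhds (F τ)) :=
        (hFcont τ ⟨hτ0, hτ1⟩).tendsto.comp
          (tendsto_nhdsWithin_of_tendsto_nhds_of_eventually_within d hd_tend
            (Filter.Eventually.of_forall hd_mem))
      exact le_of_tendsto hcomp (Filter.Eventually.of_forall hFd)
    apply Real.sSup_le _ (by positivity)
    rintro x ⟨τ, hτmem, rfl⟩
    exact hFall τ hτmem
  -- assemble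
  have hsub : {ω | s ≤ sSup ((fun τ : ℝ =>
        (Z ω (1 + τ) - Z ω 1) / (τ ^ κ * Real.log (2 / τ) ^ q)) '' Set.Ioc 0 1)} ⊆
      (⋃ mj, E mj) ∪ {ω | ¬ ContinuousOn (Z ω) (Set.Icc 1 2)} := by
    intro ω hω
    by_contra hcon
    rw [Set.mem_union] at hcon
    push_neg at hcon
    obtain ⟨h1, h2⟩ := hcon
    have h2' : ContinuousOn (Z ω) (Set.Icc 1 2) := by
      by_contra h; exact h2 h
    have := hpath ω h1 h2'
    have : s ≤ s / 2 := le_trans hω this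
    linarith
  calc P _ ≤ P ((⋃ mj, E mj) ∪ {ω | ¬ ContinuousOn (Z ω) (Set.Icc 1 2)}) := measure_mono hsub
  _ ≤ P (⋃ mj, E mj) + P {ω | ¬ ContinuousOn (Z ω) (Set.Icc 1 2)} := measure_union_le _ _
  _ = P (⋃ mj, E mj) := by
      rw [show P {ω | ¬ ContinuousOn (Z ω) (Set.Icc 1 2)} = 0 from hcont, add_zero]
  _ ≤ ∑' mj : ℕ × ℕ, P (E mj) := measure_iUnion_le _
  _ ≤ _ := le_trans (ENNReal.tsum_le_tsum hE_bound) htail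

/-- One-parameter chaining bound for the temporal modulus of continuity. -/
theorem temporal_modulus_chaining {Ω : Type*} [MeasurableSpace Ω] (P : Measure Ω)
    [IsProbabilityMeasure P] (Y : Ω → ℝ → ℝ)
    (hmeas : Measurable (Function.uncurry Y))
    (hcont : ∀ᵐ ω ∂P, ContinuousOn (Y ω) (Set.Icc 1 2))
    (κ c s₀ : ℝ) (hκ : κ ∈ Set.Ioo (0 : ℝ) 1) (hc : 0 < c) (hs₀ : 0 < s₀)
    (hup : ∀ α₁ α₂ : ℝ, 1 ≤ α₂ → α₂ < α₁ → α₁ ≤ 2 → ∀ s : ℝ, s₀ ≤ s →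
      P {ω | s * (α₁ - α₂) ^ κ ≤ Y ω α₁ - Y ω α₂} ≤
        ENNReal.ofReal (Real.exp (-c * s ^ ((3 : ℝ) / 2))))
    (hlow : ∀ α₁ α₂ : ℝ, 1 ≤ α₂ → α₂ < α₁ → α₁ ≤ 2 → ∀ s : ℝ, s₀ ≤ s →
      P {ω | Y ω α₁ - Y ω α₂ ≤ -(s * (α₁ - α₂) ^ κ)} ≤
        ENNReal.ofReal (Real.exp (-c * s ^ 2))) :
    ∃ c' : ℝ, 0 < c' ∧ ∃ s₁ : ℝ, 0 < s₁ ∧ ∀ s : ℝ, s₁ ≤ s →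
      (P {ω | s ≤ sSup ((fun τ : ℝ =>
            (Y ω (1 + τ) - Y ω 1) / (τ ^ κ * Real.log (2 / τ) ^ ((2 : ℝ) / 3))) ''
          Set.Ioc 0 1)} ≤ ENNReal.ofReal (Real.exp (-c' * s ^ ((3 : ℝ) / 2)))) ∧
      (P {ω | sInf ((fun τ : ℝ =>
            (Y ω (1 + τ) - Y ω 1) / (τ ^ κ * Real.log (2 / τ) ^ ((1 : ℝ) / 2))) ''
          Set.Ioc 0 1) ≤ -s} ≤ ENNReal.ofReal (Real.exp (-c' * s ^ 2))) := by
  -- upper-tail application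
  obtain ⟨c₁, hc₁, s₁₁, hs₁₁, h₁⟩ :=
    master_chain P Y hcont κ c s₀ ((3:ℝ)/2) ((2:ℝ)/3) hκ hc hs₀ (by norm_num)
      (by norm_num) (by norm_num) (by norm_num) hup
  -- lower-tail application via -Y
  have hcont' : ∀ᵐ ω ∂P, ContinuousOn ((fun ω α => -Y ω α) ω) (Set.Icc 1 2) := by
    filter_upwards [hcont] with ω h using h.neg
  have hub₂ : ∀ α₁ α₂ : ℝ, 1 ≤ α₂ → α₂ < α₁ → α₁ ≤ 2 → ∀ s : ℝ, s₀ ≤ s →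
      P {ω | s * (α₁ - α₂) ^ κ ≤ (fun ω α => -Y ω α) ω α₁ - (fun ω α => -Y ω α) ω α₂} ≤
        ENNReal.ofReal (Real.exp (-c * s ^ ((2:ℝ)))) := by
    intro α₁ α₂ h1 h2 h3 s hs
    have hset : {ω | s * (α₁ - α₂) ^ κ ≤ (fun ω α => -Y ω α) ω α₁ -
        (fun ω α => -Y ω α) ω α₂} = {ω | Y ω α₁ - Y ω α₂ ≤ -(s * (α₁ - α₂) ^ κ)} := by
      ext ω
      simp only [Set.mem_setOf_eq]
      constructor <;> intro h <;> linarith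
    rw [hset, Real.rpow_two]
    exact hlow α₁ α₂ h1 h2 h3 s hs
  obtain ⟨c₂, hc₂, s₁₂, hs₁₂, h₂⟩ :=
    master_chain P (fun ω α => -Y ω α) hcont' κ c s₀ ((2:ℝ)) ((1:ℝ)/2) hκ hc hs₀
      (by norm_num) (by norm_num) (by norm_num) (by norm_num) hub₂
  refine ⟨min c₁ c₂, lt_min hc₁ hc₂, max s₁₁ s₁₂, lt_of_lt_of_le hs₁₁ (le_max_left _ _), ?_⟩
  intro s hs
  have hs1 : s₁₁ ≤ s := le_trans (le_max_left _ _) hs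
  have hs2 : s₁₂ ≤ s := le_trans (le_max_right _ _) hs
  have hs_pos : 0 < s := lt_of_lt_of_le (lt_of_lt_of_le hs₁₁ (le_max_left _ _)) hs
  constructor
  · refine le_trans (h₁ s hs1) (ENNReal.ofReal_le_ofReal (Real.exp_le_exp.2 ?_))
    have hpow : (0:ℝ) ≤ s ^ ((3:ℝ)/2) := Real.rpow_nonneg hs_pos.le _
    nlinarith [min_le_left c₁ c₂]
  · have h₂s := h₂ s hs2
    have hsetinf : {ω | s ≤ sSup ((fun τ : ℝ =>
          ((fun ω α => -Y ω α) ω (1 + τ) - (fun ω α => -Y ω α) ω 1) /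
            (τ ^ κ * Real.log (2 / τ) ^ ((1:ℝ)/2))) '' Set.Ioc 0 1)} =
        {ω | sInf ((fun τ : ℝ =>
          (Y ω (1 + τ) - Y ω 1) / (τ ^ κ * Real.log (2 / τ) ^ ((1:ℝ)/2))) ''
            Set.Ioc 0 1) ≤ -s} := by
      ext ω
      simp only [Set.mem_setOf_eq]
      have himg : (fun τ : ℝ =>
          ((fun ω α => -Y ω α) ω (1 + τ) - (fun ω α => -Y ω α) ω 1) /
            (τ ^ κ * Real.log (2 / τ) ^ ((1:ℝ)/2))) '' Set.Ioc 0 1 =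
          -((fun τ : ℝ => (Y ω (1 + τ) - Y ω 1) /
            (τ ^ κ * Real.log (2 / τ) ^ ((1:ℝ)/2))) '' Set.Ioc 0 1) := by
        rw [← Set.image_neg_eq_neg, ← Set.image_comp]
        apply Set.image_congr
        intro τ _
        simp only [Function.comp_apply]
        rw [← neg_div]
        ring_nf
      rw [himg, Real.sInf_def]
      constructor
      · intro h; linarith
      · intro h; linarith
    rw [hsetinf] at h₂s
    refine le_trans h₂s (ENNReal.ofReal_le_ofReal (Real.exp_le_exp.2 ?_))
    rw [Real.rpow_two]
    nlinarith [min_le_right c₁ c₂, sq_nonneg s]
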